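/- Let F be an intersecting family over [n]. Define the multisig interpreter g_F : (Option M)^n → Option M by: g_F(m₁,…,mₙ) = some x if there exists S ∈ F (chosen as the first such S in a fixed enumeration of F) with m_i = some x for all i ∈ S, and g_F(m) = none otherwise (also requiring all m_i for i ∈ S to agree). Then g_F is a monotone sig-interpreter: for all m and i, if g_F(m₁,…,m_{i−1}, none, m_{i+1},…,mₙ) = some x then g_F(m₁,…,m_{i−1}, mᵢ, m_{i+1},…,mₙ) = some x for any mᵢ. -/

import Mathlib

/-- Check a candidate authorized set `S`: succeed with `some x` iff `S` is
nonempty and all entries of `m` indexed by `S` are equal to `some x`. -/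
noncomputable def checkSet {M : Type*} [DecidableEq M] {n : ℕ}
    (S : Finset (Fin n)) (m : Fin n → Option M) : Option M :=
  match S.toList with
  | [] => none
  | i :: _ =>
    match m i with
    | none => none
    | some x => if ∀ j ∈ S, m j = some x then some x else none

/-- The multisig interpreter associated with a fixed enumeration `L` of the
family: it outputs the value produced by the first set in `L` whose entries all
agree and are present, and `none` if no such set exists. -/
noncomputable def multisigInterp {M : Type*} [DecidableEq M] {n : ℕ}
    (L : List (Finset (Fin n))) (m : Fin n → Option M) : Option M :=
  L.findSome? (fun S => checkSet S m)

/-- A family (given as a list of subsets of `[n]`) is intersecting if any two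
members have nonempty intersection. -/
def IntersectingList {n : ℕ} (L : List (Finset (Fin n))) : Prop :=
  ∀ S ∈ L, ∀ S' ∈ L, (S ∩ S').Nonempty

/-- The multisig interpreter of an intersecting family is a monotone
sig-interpreter: filling in a missing entry never changes the output from one
valid value to another. -/
theorem multisig_interp_monotone
    {M : Type*} [DecidableEq M] {n : ℕ}
    (L : List (Finset (Fin n))) (hL : IntersectingList L)
    (m : Fin n → Option M) (i : Fin n) (x : M)
    (h : multisigInterp L (Function.update m i none) = some x) :
    multisigInterp L m = some x := by
  -- Characterize `checkSet = some x`.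
  have hchar : ∀ (S : Finset (Fin n)) (f : Fin n → Option M) (y : M),
      checkSet S f = some y → S.Nonempty ∧ ∀ j ∈ S, f j = some y := by
    intro S f y hc
    unfold checkSet at hc
    rcases hl : S.toList with _ | ⟨a, t⟩
    · rw [hl] at hc; simp at hc
    · rw [hl] at hc
      dsimp only at hc
      rcases hfa : f a with _ | z
      · rw [hfa] at hc; simp at hc
      · rw [hfa] at hc
        dsimp only at hc
        by_cases hall : ∀ j ∈ S, f j = some z
        · rw [if_pos hall] at hc
          obtain rfl : z = y := by simpa using hc
          refine ⟨⟨a, ?_⟩, hall⟩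
          · rw [← Finset.mem_toList, hl]; simp
        · rw [if_neg hall] at hc; simp at hc
  have hchar' : ∀ (S : Finset (Fin n)) (f : Fin n → Option M) (y : M),
      S.Nonempty → (∀ j ∈ S, f j = some y) → checkSet S f = some y := by
    intro S f y hS hall
    unfold checkSet
    rcases hl : S.toList with _ | ⟨a, t⟩
    · exfalso
      have := hS.choose_spec
      rw [← Finset.mem_toList, hl] at this; simp at this
    · have ha : a ∈ S := by rw [← Finset.mem_toList, hl]; simp
      dsimp only
      rw [hall a ha]
      dsimp only
      rw [if_pos hall]
  -- From `h`, get the witnessing set under the update.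
  obtain ⟨S, hSL, hS⟩ := List.exists_of_findSome?_eq_some h
  obtain ⟨hSne, hSall⟩ := hchar S _ x hS
  have hiS : i ∉ S := by
    intro hi
    have := hSall i hi
    simp [Function.update_self] at this
  have hSall' : ∀ j ∈ S, m j = some x := by
    intro j hj
    have hji : j ≠ i := fun e => hiS (e ▸ hj)
    have := hSall j hj
    rwa [Function.update_of_ne hji] at this
  have hcS : checkSet S m = some x := hchar' S m x hSne hSall'
  -- The interpreter on `m` is not `none`.
  have hne : multisigInterp L m ≠ none := by
    intro hnone
    unfold multisigInterp at hnone
    rw [List.findSome?_eq_none_iff] at hnone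
    have := hnone S hSL
    rw [hcS] at this
    exact Option.some_ne_none _ this
  rcases hy : multisigInterp L m with _ | y
  · exact (hne hy).elim
  obtain ⟨S', hS'L, hS'⟩ := List.exists_of_findSome?_eq_some hy
  obtain ⟨hS'ne, hS'all⟩ := hchar S' m y hS'
  obtain ⟨j, hj⟩ := hL S hSL S' hS'L
  rw [Finset.mem_inter] at hj
  have h1 := hSall' j hj.1
  have h2 := hS'all j hj.2
  rw [h1] at h2
  obtain rfl : x = y := by simpa using h2
  rfl
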